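/- Let n ≥ 1 and let p(x) = Σ_{l=0}^{n} (1/(l!·(n−l)!))·G_l(x)·x^{n−l}. Then for each k with 0 ≤ k ≤ n, the k-th derivative of p is given by p^{(k)}(x) = 2ᵏ·Σ_{l=k}^{n} (1/((l−k)!·(n−l)!))·G_{l−k}(x)·x^{n−l}. -/

import Mathlib

open Finset

/-- The Bernoulli polynomial `Bₙ(x)`, with generating function `t·e^{xt}/(e^t−1)`. -/
noncomputable def bernoulliPoly (n : ℕ) (x : ℝ) : ℝ :=
  Polynomial.eval x ((Polynomial.bernoulli n).map (algebraMap ℚ ℝ))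

/-- The Genocchi polynomial `Gₙ(x) = 2·Bₙ(x) − 2^{n+1}·Bₙ(x/2)`, with generating
function `2t·e^{xt}/(e^t+1)`. -/
noncomputable def genocchiPoly (n : ℕ) (x : ℝ) : ℝ :=
  2 * bernoulliPoly n x - 2 ^ (n + 1) * bernoulliPoly n (x / 2)

/-- The Genocchi number `Gₙ = Gₙ(0)`. -/
noncomputable def genocchi (n : ℕ) : ℝ := genocchiPoly n 0

/-- The Euler polynomial `Eₙ(x) = (2·B_{n+1}(x) − 2^{n+2}·B_{n+1}(x/2))/(n+1)`, with
generating function `2·e^{xt}/(e^t+1)`. -/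
noncomputable def eulerPoly (n : ℕ) (x : ℝ) : ℝ :=
  (2 * bernoulliPoly (n + 1) x - 2 ^ (n + 2) * bernoulliPoly (n + 1) (x / 2)) / (n + 1)

/-- The Euler number (at zero) `Eₙ = Eₙ(0)`. -/
noncomputable def eulerNum (n : ℕ) : ℝ := eulerPoly n 0

lemma hasDerivAt_bernoulliPoly (n : ℕ) (x : ℝ) :
    HasDerivAt (fun y => bernoulliPoly n y) (n * bernoulliPoly (n - 1) x) x := by
  have h := Polynomial.hasDerivAt ((Polynomial.bernoulli n).map (algebraMap ℚ ℝ)) x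
  convert h using 1
  all_goals try rfl
  rw [Polynomial.derivative_map, Polynomial.derivative_bernoulli]
  simp [bernoulliPoly]

lemma hasDerivAt_genocchiPoly (n : ℕ) (x : ℝ) :
    HasDerivAt (fun y => genocchiPoly n y) (n * genocchiPoly (n - 1) x) x := by
  have h1 := (hasDerivAt_bernoulliPoly n x).const_mul (2 : ℝ)
  have h2 : HasDerivAt (fun y : ℝ => bernoulliPoly n (y / 2))
      ((n * bernoulliPoly (n - 1) (x / 2)) * (1 / 2)) x := by
    have := (hasDerivAt_bernoulliPoly n (x / 2)).comp x
      ((hasDerivAt_id x).div_const 2)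
    simpa [Function.comp_def] using this
  have h := h1.sub (h2.const_mul ((2 : ℝ) ^ (n + 1)))
  convert h using 1
  all_goals try rfl
  unfold genocchiPoly
  cases n with
  | zero => simp
  | succ m =>
    simp only [Nat.add_sub_cancel]
    push_cast
    rw [pow_succ]
    ring

lemma hasDerivAt_S (n k : ℕ) (hk : k < n) (x : ℝ) :
    HasDerivAt (fun y : ℝ => ∑ l ∈ Finset.Icc k n,
        (1 / (((l - k).factorial : ℝ) * ((n - l).factorial : ℝ))) *
          genocchiPoly (l - k) y * y ^ (n - l))
      (2 * ∑ l ∈ Finset.Icc (k + 1) n,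
        (1 / (((l - (k + 1)).factorial : ℝ) * ((n - l).factorial : ℝ))) *
          genocchiPoly (l - (k + 1)) x * x ^ (n - l)) x := by
  set c : ℕ → ℝ := fun l => 1 / (((l - k).factorial : ℝ) * ((n - l).factorial : ℝ)) with hc
  have hterm : ∀ l ∈ Finset.Icc k n, HasDerivAt
      (fun y : ℝ => c l * genocchiPoly (l - k) y * y ^ (n - l))
      (c l * (((l - k : ℕ) : ℝ) * genocchiPoly (l - k - 1) x) * x ^ (n - l) +
        c l * genocchiPoly (l - k) x * (((n - l : ℕ) : ℝ) * x ^ (n - l - 1))) x := by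
    intro l _
    exact ((hasDerivAt_genocchiPoly (l - k) x).const_mul (c l)).mul (hasDerivAt_pow (n - l) x)
  have h := HasDerivAt.fun_sum hterm
  convert h using 1
  all_goals try rfl
  rw [Finset.sum_add_distrib]
  have hA : ∑ l ∈ Finset.Icc k n,
      c l * (((l - k : ℕ) : ℝ) * genocchiPoly (l - k - 1) x) * x ^ (n - l) =
      ∑ l ∈ Finset.Icc (k + 1) n,
        (1 / (((l - (k + 1)).factorial : ℝ) * ((n - l).factorial : ℝ))) *
          genocchiPoly (l - (k + 1)) x * x ^ (n - l) := by
    rw [Finset.Icc_eq_cons_Ioc (le_of_lt hk), Finset.sum_cons, ← Finset.Icc_add_one_left_eq_Ioc]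
    simp only [Nat.sub_self, Nat.cast_zero, zero_mul, mul_zero, zero_add]
    refine Finset.sum_congr rfl fun l hl => ?_
    simp only [Finset.mem_Icc] at hl
    obtain ⟨m, hm⟩ : ∃ m, l - k = m + 1 :=
      ⟨l - k - 1, by omega⟩
    have h2 : l - (k + 1) = m := by omega
    simp only [hc, hm, h2, Nat.factorial_succ, Nat.add_sub_cancel]
    have hmf : ((m.factorial : ℝ)) ≠ 0 := by positivity
    have hnf : (((n - l).factorial : ℝ)) ≠ 0 := by positivity
    push_cast
    field_simp
  have hB : ∑ l ∈ Finset.Icc k n,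
      c l * genocchiPoly (l - k) x * (((n - l : ℕ) : ℝ) * x ^ (n - l - 1)) =
      ∑ l ∈ Finset.Icc (k + 1) n,
        (1 / (((l - (k + 1)).factorial : ℝ) * ((n - l).factorial : ℝ))) *
          genocchiPoly (l - (k + 1)) x * x ^ (n - l) := by
    rw [Finset.Icc_eq_cons_Ico (le_of_lt hk), Finset.sum_cons]
    simp only [Nat.sub_self, Nat.cast_zero, zero_mul, mul_zero, zero_add]
    refine Finset.sum_nbij' (fun l => l + 1) (fun l => l - 1) ?_ ?_ ?_ ?_ ?_
    · intro l hl; simp only [Finset.mem_Ico] at hl; simp only [Finset.mem_Icc]; omega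
    · intro l hl; simp only [Finset.mem_Icc] at hl; simp only [Finset.mem_Ico]; omega
    · intro l hl; omega
    · intro l hl; simp only [Finset.mem_Icc] at hl; omega
    · intro l hl
      simp only [Finset.mem_Ico] at hl
      have h1 : l + 1 - (k + 1) = l - k := by omega
      obtain ⟨m, hm⟩ : ∃ m, n - l = m + 1 := ⟨n - l - 1, by omega⟩
      have h2 : n - (l + 1) = m := by omega
      simp only [hc, h1, h2, hm, Nat.factorial_succ, Nat.add_sub_cancel]
      have hmf : ((m.factorial : ℝ)) ≠ 0 := by positivity
      have hkf : (((l - k).factorial : ℝ)) ≠ 0 := by positivity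
      push_cast
      field_simp
  rw [hA, hB]
  ring

theorem iteratedDeriv_sum_genocchi_pow_factorial (n : ℕ) (hn : 1 ≤ n) (k : ℕ) (hk : k ≤ n)
    (x : ℝ) :
    iteratedDeriv k (fun y : ℝ => ∑ l ∈ Finset.range (n + 1),
        (1 / ((l.factorial : ℝ) * ((n - l).factorial : ℝ))) * genocchiPoly l y * y ^ (n - l)) x =
      2 ^ k * ∑ l ∈ Finset.Icc k n,
        (1 / (((l - k).factorial : ℝ) * ((n - l).factorial : ℝ))) *
          genocchiPoly (l - k) x * x ^ (n - l) := by
  induction k generalizing x with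
  | zero =>
    rw [iteratedDeriv_zero]
    have : Finset.range (n + 1) = Finset.Icc 0 n := by
      rw [← Finset.Ico_add_one_right_eq_Icc, Finset.range_eq_Ico]
    rw [this]
    simp
  | succ k ih =>
    have hk' : k < n := hk
    have heq : iteratedDeriv k (fun y : ℝ => ∑ l ∈ Finset.range (n + 1),
        (1 / ((l.factorial : ℝ) * ((n - l).factorial : ℝ))) * genocchiPoly l y * y ^ (n - l)) =
        fun y => 2 ^ k * ∑ l ∈ Finset.Icc k n,
          (1 / (((l - k).factorial : ℝ) * ((n - l).factorial : ℝ))) *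
            genocchiPoly (l - k) y * y ^ (n - l) :=
      funext fun y => ih (le_of_lt hk') y
    rw [iteratedDeriv_succ, heq]
    have hd := ((hasDerivAt_S n k hk' x).const_mul ((2 : ℝ) ^ k)).deriv
    rw [hd]
    ring
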